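/- Let W_1 : ℕ → (0,∞) satisfy Σ_{k=1}^∞ 1/W_1(k) < ∞ and let W_2 : ℕ → (0,∞) be non-increasing. Let N, d ∈ ℕ with d ≥ 1, and let (φ_n)_{n≥0} be any sequence in ℤ^d with the flow property (|Σ_j φ_n(j)| ≤ N; at each step exactly one positive coordinate increments by 1, one nonpositive coordinate decrements by 1, all others fixed). With Υ^+(φ_n) = Σ_{j: φ_n(j)>0} W_1(φ_n(j)) and Υ^-(φ_n) = Σ_{j: φ_n(j)≤0} W_2(-φ_n(j)), one has Σ_{n=0}^∞ Υ^-(φ_n)/Υ^+(φ_n) ≤ d·W_2(0)·d·Σ_{k=1}^∞ 1/W_1(k) < ∞. -/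
import Mathlib


/-- The flow property of admissible crossing-number evolutions. -/
def IsFlowSeq (N d : ℕ) (φ : ℕ → Fin d → ℤ) : Prop :=
  (∀ n, |∑ j, φ n j| ≤ (N : ℤ)) ∧
  ∀ n, ∃ j₁ j₂ : Fin d, j₁ ≠ j₂ ∧
    0 < φ n j₁ ∧ φ (n + 1) j₁ = φ n j₁ + 1 ∧
    φ n j₂ ≤ 0 ∧ φ (n + 1) j₂ = φ n j₂ - 1 ∧
    ∀ j, j ≠ j₁ → j ≠ j₂ → φ (n + 1) j = φ n j

theorem stmt_15 (W₁ W₂ : ℕ → ℝ) (hW₁pos : ∀ k, 0 < W₁ k) (hW₂pos : ∀ k, 0 < W₂ k)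
    (hW₁sum : Summable (fun k : ℕ => 1 / W₁ (k + 1))) (hW₂mono : Antitone W₂)
    (N d : ℕ) (hd : 1 ≤ d) (φ : ℕ → Fin d → ℤ) (hφ : IsFlowSeq N d φ) :
    Summable (fun n : ℕ =>
      (∑ j ∈ Finset.univ.filter (fun j => φ n j ≤ 0), W₂ (-φ n j).toNat) /
      (∑ j ∈ Finset.univ.filter (fun j => 0 < φ n j), W₁ (φ n j).toNat)) ∧
    (∑' n : ℕ,
      (∑ j ∈ Finset.univ.filter (fun j => φ n j ≤ 0), W₂ (-φ n j).toNat) /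
      (∑ j ∈ Finset.univ.filter (fun j => 0 < φ n j), W₁ (φ n j).toNat))
      ≤ (d : ℝ) * W₂ 0 * ((d : ℝ) * ∑' k : ℕ, 1 / W₁ (k + 1)) := by
  classical
  obtain ⟨hN, hstep⟩ := hφ
  choose j₁ j₂ hne hpos hinc hnp hdec hoth using hstep
  -- positive coordinates are nondecreasing
  have hmono1 : ∀ n j, 0 < φ n j → φ n j ≤ φ (n + 1) j := by
    intro n j hj
    by_cases h1 : j = j₁ n
    · subst h1; rw [hinc n]; omega
    by_cases h2 : j = j₂ n
    · subst h2; exact absurd hj (not_lt.2 (hnp n))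
    · rw [hoth n j h1 h2]
  have hmono : ∀ n m j, n ≤ m → 0 < φ n j → φ n j ≤ φ m j := by
    intro n m j hnm
    induction m, hnm using Nat.le_induction with
    | base => intro _; exact le_rfl
    | succ m hm ih =>
      intro h
      exact le_trans (ih h) (hmono1 m j (lt_of_lt_of_le h (ih h)))
  -- the labelling map is injective
  set g : ℕ → Fin d × ℕ := fun n => (j₁ n, (φ n (j₁ n)).toNat - 1) with hg
  have hginj : Function.Injective g := by
    intro n m hnm
    by_contra hne'
    wlog hlt : n < m generalizing n m
    · exact this hnm.symm (Ne.symm hne') (by omega)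
    have h1 : j₁ n = j₁ m := congrArg Prod.fst hnm
    have h2 : (φ n (j₁ n)).toNat - 1 = (φ m (j₁ m)).toNat - 1 := congrArg Prod.snd hnm
    have hpn := hpos n
    have hpm := hpos m
    have heq : φ n (j₁ n) = φ m (j₁ m) := by omega
    have hstep1 : φ (n + 1) (j₁ n) = φ n (j₁ n) + 1 := hinc n
    have hle : φ (n + 1) (j₁ n) ≤ φ m (j₁ n) :=
      hmono (n + 1) m (j₁ n) (by omega) (by rw [hstep1]; have := hpos n; omega)
    rw [h1] at hle hstep1 heq
    omega
  set c : ℝ := (d : ℝ) * W₂ 0 with hc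
  have hcpos : 0 < c := by
    have : (0 : ℝ) < d := by exact_mod_cast hd
    exact mul_pos this (hW₂pos 0)
  set F : Fin d × ℕ → ℝ := fun p => c * (1 / W₁ (p.2 + 1)) with hF
  have hFnonneg : ∀ p, 0 ≤ F p := fun p =>
    le_of_lt (mul_pos hcpos (div_pos one_pos (hW₁pos _)))
  have hFsummable : Summable F := by
    rw [← (Equiv.sigmaEquivProd (Fin d) ℕ).summable_iff]
    exact summable_sigma_of_nonneg (fun p => hFnonneg _) |>.2
      ⟨fun j => (hW₁sum.mul_left c), Summable.of_finite⟩
  -- pointwise bound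
  set T : ℕ → ℝ := fun n =>
      (∑ j ∈ Finset.univ.filter (fun j => φ n j ≤ 0), W₂ (-φ n j).toNat) /
      (∑ j ∈ Finset.univ.filter (fun j => 0 < φ n j), W₁ (φ n j).toNat) with hT
  have hTnonneg : ∀ n, 0 ≤ T n := by
    intro n
    apply div_nonneg
    · exact Finset.sum_nonneg fun j _ => (hW₂pos _).le
    · exact Finset.sum_nonneg fun j _ => (hW₁pos _).le
  have hTle : ∀ n, T n ≤ F (g n) := by
    intro n
    have ha : 1 ≤ (φ n (j₁ n)).toNat := by have := hpos n; omega
    have hFg : F (g n) = c * (1 / W₁ ((φ n (j₁ n)).toNat)) := by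
      have hkey : (φ n (j₁ n)).toNat - 1 + 1 = (φ n (j₁ n)).toNat := by omega
      simp only [hF, hg, hkey]
    rw [hFg, hT, mul_one_div]
    have hnum : (∑ j ∈ Finset.univ.filter (fun j => φ n j ≤ 0), W₂ (-φ n j).toNat) ≤ c := by
      calc (∑ j ∈ Finset.univ.filter (fun j => φ n j ≤ 0), W₂ (-φ n j).toNat)
          ≤ ∑ j ∈ Finset.univ.filter (fun j => φ n j ≤ 0), W₂ 0 :=
            Finset.sum_le_sum fun j _ => hW₂mono (Nat.zero_le _)
        _ = (Finset.univ.filter (fun j => φ n j ≤ 0)).card * W₂ 0 := by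
            rw [Finset.sum_const, nsmul_eq_mul]
        _ ≤ c := by
            rw [hc]
            apply mul_le_mul_of_nonneg_right _ (hW₂pos 0).le
            have hcard : (Finset.univ.filter (fun j => φ n j ≤ 0)).card ≤ d := by
              simpa using Finset.card_filter_le Finset.univ (fun j => φ n j ≤ 0)
            exact_mod_cast hcard
    have hden : W₁ ((φ n (j₁ n)).toNat) ≤
        ∑ j ∈ Finset.univ.filter (fun j => 0 < φ n j), W₁ (φ n j).toNat := by
      apply Finset.single_le_sum (f := fun j => W₁ (φ n j).toNat)
        (fun j _ => (hW₁pos _).le)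
      simp [hpos n]
    exact div_le_div₀ hcpos.le hnum (hW₁pos _) hden
  have hTsummable : Summable T := by
    apply Summable.of_nonneg_of_le hTnonneg hTle
    exact hFsummable.comp_injective hginj
  refine ⟨hTsummable, ?_⟩
  have h1 : ∑' n, T n ≤ ∑' p, F p :=
    Summable.tsum_le_tsum_of_inj g hginj (fun p _ => hFnonneg p) hTle hTsummable hFsummable
  have h2 : ∑' p, F p = (d : ℝ) * W₂ 0 * ((d : ℝ) * ∑' k : ℕ, 1 / W₁ (k + 1)) := by
    rw [Summable.tsum_prod hFsummable]
    simp only [hF]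
    rw [tsum_fintype]
    rw [Finset.sum_const, Finset.card_univ, Fintype.card_fin, nsmul_eq_mul]
    rw [tsum_mul_left]
    ring
  calc ∑' n, T n ≤ ∑' p, F p := h1
    _ = _ := h2
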